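/- Let J, R ∈ ℝ^{n×n} with J = −J^T and R = R^T positive semidefinite, and let h ≥ 0. Then the Strang splitting flux of the J–R decomposition of ẋ = (J − R)x is nonexpansive in the Euclidean norm: for every x ∈ ℝ^n, ‖exp(−(h/2)R)·exp(hJ)·exp(−(h/2)R)·x‖₂ ≤ ‖x‖₂. (The Strang splitting preserves the dissipation inequality of the homogeneous pH-ODE with Hamiltonian H(x) = (1/2)‖x‖₂².) -/

import Mathlib

open Matrix
open scoped Matrix.Norms.L2Operator

private lemma mulVec_isometry {n : ℕ} {V : Matrix (Fin n) (Fin n) ℝ}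
    (hV : Vᵀ * V = 1) (y : Fin n → ℝ) :
    V.mulVec y ⬝ᵥ V.mulVec y = y ⬝ᵥ y := by
  rw [dotProduct_mulVec, ← Matrix.mulVec_transpose, mulVec_mulVec, hV, one_mulVec]

private lemma exp_skew_isometry {n : ℕ} (A : Matrix (Fin n) (Fin n) ℝ)
    (hA : Aᵀ = -A) (x : Fin n → ℝ) :
    (NormedSpace.exp A).mulVec x ⬝ᵥ (NormedSpace.exp A).mulVec x = x ⬝ᵥ x := by
  refine mulVec_isometry ?_ x
  have h2 := Matrix.exp_add_of_commute (-A) A ((Commute.refl A).neg_left)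
  rw [neg_add_cancel, NormedSpace.exp_zero] at h2
  rw [← Matrix.exp_transpose, hA, ← h2]

private lemma exp_neg_psd_contraction {n : ℕ} (B : Matrix (Fin n) (Fin n) ℝ)
    (hB : B.PosSemidef) (x : Fin n → ℝ) :
    (NormedSpace.exp (-B)).mulVec x ⬝ᵥ (NormedSpace.exp (-B)).mulVec x ≤ x ⬝ᵥ x := by
  have hH : (-B).IsHermitian := hB.1.neg
  set U : Matrix (Fin n) (Fin n) ℝ := (hH.eigenvectorUnitary : Matrix (Fin n) (Fin n) ℝ)
  have hU1 : star U * U = 1 := (Unitary.mem_iff.mp hH.eigenvectorUnitary.2).1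
  have hU2 : U * star U = 1 := (Unitary.mem_iff.mp hH.eigenvectorUnitary.2).2
  have hstarU : star U = Uᵀ := by
    rw [Matrix.star_eq_conjTranspose, Matrix.conjTranspose_eq_transpose_of_trivial]
  have hUinv : U⁻¹ = star U := Matrix.inv_eq_right_inv hU2
  have hUunit : IsUnit U := Matrix.isUnit_iff_isUnit_det U |>.mpr
    (by
      have := congrArg Matrix.det hU2
      rw [Matrix.det_mul, Matrix.det_one] at this
      exact IsUnit.of_mul_eq_one _ this)
  -- spectral decomposition
  have hspec : -B = U * Matrix.diagonal (RCLike.ofReal ∘ hH.eigenvalues) * star U :=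
    hH.spectral_theorem
  -- eigenvalues of -B are nonpositive
  have heig : ∀ i, hH.eigenvalues i ≤ 0 := by
    intro i
    rw [hH.eigenvalues_eq]
    have h1 : (-B) *ᵥ ⇑(hH.eigenvectorBasis i) = -(B *ᵥ ⇑(hH.eigenvectorBasis i)) := by
      rw [Matrix.neg_mulVec]
    rw [h1, dotProduct_neg]
    simpa using hB.dotProduct_mulVec_nonneg ⇑(hH.eigenvectorBasis i)
  -- exponential via conjugation
  have hexp : NormedSpace.exp (-B) =
      U * Matrix.diagonal (fun i => Real.exp (hH.eigenvalues i)) * star U := by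
    conv_lhs => rw [hspec, ← hUinv]
    rw [Matrix.exp_conj U _ hUunit, hUinv]
    congr 2
    rw [Matrix.exp_diagonal]
    rw [Pi.exp_def]
    funext i
    simp [← Real.exp_eq_exp_ℝ]
  set E : Matrix (Fin n) (Fin n) ℝ := Matrix.diagonal (fun i => Real.exp (hH.eigenvalues i))
  set w : Fin n → ℝ := (star U).mulVec x with hw
  have hsplit : (NormedSpace.exp (-B)).mulVec x = U.mulVec (E.mulVec w) := by
    rw [hexp, hw, mulVec_mulVec, mulVec_mulVec]
  rw [hsplit]
  have hUiso : U.mulVec (E.mulVec w) ⬝ᵥ U.mulVec (E.mulVec w) = E.mulVec w ⬝ᵥ E.mulVec w := by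
    refine mulVec_isometry ?_ _
    rw [← hstarU, hU1]
  have hWiso : w ⬝ᵥ w = x ⬝ᵥ x := by
    refine mulVec_isometry ?_ x
    rw [hstarU, Matrix.transpose_transpose, ← hstarU, hU2]
  rw [hUiso, ← hWiso]
  -- diagonal contraction
  rw [dotProduct, dotProduct]
  refine Finset.sum_le_sum fun i _ => ?_
  rw [Matrix.mulVec_diagonal]
  have he : Real.exp (hH.eigenvalues i) ≤ 1 := Real.exp_le_one_iff.mpr (heig i)
  have he0 : 0 < Real.exp (hH.eigenvalues i) := Real.exp_pos _
  have : Real.exp (hH.eigenvalues i) * w i * (Real.exp (hH.eigenvalues i) * w i)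
      = (Real.exp (hH.eigenvalues i))^2 * (w i * w i) := by ring
  rw [this]
  have hsq : (Real.exp (hH.eigenvalues i))^2 ≤ 1 := by
    nlinarith
  nlinarith [mul_self_nonneg (w i)]

/-- The Strang splitting flux `exp(-(h/2)R)·exp(hJ)·exp(-(h/2)R)` of the J–R
decomposition of the homogeneous pH-ODE `ẋ = (J - R) x` (with `J` skew-symmetric and
`R` symmetric positive semidefinite) is nonexpansive in the Euclidean norm
`‖v‖₂ = (v ⬝ᵥ v)^(1/2)`, i.e. it preserves the dissipation inequality for the
Hamiltonian `H(x) = (1/2)‖x‖₂²`. -/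
theorem strang_JR_splitting_nonexpansive {n : ℕ}
    (J R : Matrix (Fin n) (Fin n) ℝ)
    (hJ : J = -Jᵀ) (hR : Rᵀ = R) (hRpsd : R.PosSemidef)
    (h : ℝ) (hh : 0 ≤ h) :
    ∀ x : Fin n → ℝ,
      Real.sqrt
          ((NormedSpace.exp (-(h / 2) • R) * NormedSpace.exp (h • J) *
              NormedSpace.exp (-(h / 2) • R)).mulVec x ⬝ᵥ
            (NormedSpace.exp (-(h / 2) • R) * NormedSpace.exp (h • J) *
              NormedSpace.exp (-(h / 2) • R)).mulVec x) ≤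
        Real.sqrt (x ⬝ᵥ x) := by
  intro x
  apply Real.sqrt_le_sqrt
  have hBpsd : ((h / 2) • R).PosSemidef := by
    refine Matrix.PosSemidef.of_dotProduct_mulVec_nonneg ?_ ?_
    · rw [Matrix.IsHermitian, Matrix.conjTranspose_smul,
        Matrix.conjTranspose_eq_transpose_of_trivial, hR]
      simp
    · intro y
      rw [Matrix.smul_mulVec, dotProduct_smul]
      exact smul_nonneg (by linarith) (hRpsd.dotProduct_mulVec_nonneg y)
  have hneg : -(h / 2) • R = -((h / 2) • R) := by
    rw [neg_smul]
  have hJt : Jᵀ = -J := by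
    conv_lhs => rw [hJ]
    simp
  have hskew : (h • J)ᵀ = -(h • J) := by
    rw [Matrix.transpose_smul, hJt, smul_neg]
  set M₁ := NormedSpace.exp (-(h / 2) • R)
  set M₂ := NormedSpace.exp (h • J)
  have hsplit : (M₁ * M₂ * M₁).mulVec x = M₁.mulVec (M₂.mulVec (M₁.mulVec x)) := by
    rw [mulVec_mulVec, mulVec_mulVec]
  rw [hsplit]
  have hM1 : ∀ y : Fin n → ℝ, M₁.mulVec y ⬝ᵥ M₁.mulVec y ≤ y ⬝ᵥ y := by
    intro y
    have := exp_neg_psd_contraction _ hBpsd y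
    rwa [← hneg] at this
  have hM2 : ∀ y : Fin n → ℝ, M₂.mulVec y ⬝ᵥ M₂.mulVec y = y ⬝ᵥ y :=
    exp_skew_isometry _ hskew
  calc M₁.mulVec (M₂.mulVec (M₁.mulVec x)) ⬝ᵥ M₁.mulVec (M₂.mulVec (M₁.mulVec x))
      ≤ M₂.mulVec (M₁.mulVec x) ⬝ᵥ M₂.mulVec (M₁.mulVec x) := hM1 _
    _ = M₁.mulVec x ⬝ᵥ M₁.mulVec x := hM2 _
    _ ≤ x ⬝ᵥ x := hM1 _
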